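/- arXiv:1610.09020 — 2 statements merged into one kernel-verified Lean document; each statement's English description precedes it below -/
import Mathlib

section
/- For any vector u in a real Hilbert space and R > 0, the Huber function composed with the norm satisfies h_R(‖u‖) = ‖u‖² − d_B(u)², where d_B(u) is the distance from u to the closed ball B of radius R centered at the origin. -/
noncomputable def huber (R t : ℝ) : ℝ := if |t| ≤ R then t ^ 2 else 2 * R * |t| - R ^ 2

theorem huber_norm_repr {H : Type*} [NormedAddCommGroup H] [InnerProductSpace ℝ H]
    (R : ℝ) (hR : 0 < R) (u : H) :
    huber R ‖u‖ = ‖u‖ ^ 2 - (Metric.infDist u (Metric.closedBall (0 : H) R)) ^ 2 := by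
  have hd : Metric.infDist u (Metric.closedBall (0 : H) R) = max (‖u‖ - R) 0 := by
    rcases le_or_gt ‖u‖ R with h | h
    · rw [Metric.infDist_zero_of_mem (by simpa [Metric.mem_closedBall, dist_zero_right] using h)]
      simp [max_eq_right, sub_nonpos.mpr h]
    · have hu : ‖u‖ ≠ 0 := (hR.trans h).ne'
      rw [max_eq_left (by linarith)]
      apply le_antisymm
      · have hmem : (R / ‖u‖) • u ∈ Metric.closedBall (0 : H) R := by
          simp only [Metric.mem_closedBall, dist_zero_right, norm_smul, Real.norm_eq_abs,
            abs_of_nonneg (by positivity : (0:ℝ) ≤ R / ‖u‖)]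
          field_simp
          exact le_rfl
        calc Metric.infDist u (Metric.closedBall (0 : H) R) ≤ dist u ((R / ‖u‖) • u) :=
              Metric.infDist_le_dist_of_mem hmem
          _ = ‖u‖ - R := by
              rw [dist_eq_norm]
              have : u - (R / ‖u‖) • u = (1 - R / ‖u‖) • u := by
                rw [sub_smul, one_smul]
              rw [this, norm_smul, Real.norm_eq_abs,
                abs_of_nonneg (by rw [sub_nonneg]; exact (div_le_one (by positivity)).mpr h.le)]
              field_simp
      · by_contra hlt
        push_neg at hlt
        obtain ⟨v, hv, hdv⟩ := (Metric.infDist_lt_iff ⟨0, by simp [hR.le]⟩).mp hlt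
        simp only [Metric.mem_closedBall, dist_zero_right] at hv
        have h2 := norm_sub_norm_le u v
        rw [← dist_eq_norm] at h2
        linarith
  rw [hd]
  unfold huber
  rcases le_or_gt ‖u‖ R with h | h
  · rw [if_pos (by rwa [abs_of_nonneg (norm_nonneg u)]), max_eq_right (by linarith)]
    ring
  · rw [if_neg (by rw [abs_of_nonneg (norm_nonneg u)]; linarith),
      max_eq_left (by linarith), abs_of_nonneg (norm_nonneg u)]
    ring
end

section
/- For the Nesterov accelerated gradient method applied to minimizing a convex function F with L-Lipschitz continuous gradient over a closed convex set Z, the iterates satisfy F(z_t) − F⋆ ≤ 2L‖z₀ − z⋆‖²/(t+1)², where z⋆ is any minimizer. -/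
set_option maxHeartbeats 1000000
set_option linter.unusedSectionVars false

open Set InnerProductSpace intervalIntegral
open scoped RealInnerProductSpace

section Aux
variable {E : Type*} [NormedAddCommGroup E] [InnerProductSpace ℝ E] [CompleteSpace E]

lemma hasDerivAt_line (F : E → ℝ) (F' : E → E)
    (hgrad : ∀ u, HasGradientAt F (F' u) u) (x v : E) (s : ℝ) :
    HasDerivAt (fun t : ℝ => F (x + t • v)) ⟪F' (x + s • v), v⟫_ℝ s := by
  have hl : HasDerivAt (fun t : ℝ => x + t • v) v s := by
    simpa using ((hasDerivAt_id s).smul_const v).const_add x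
  have := (hgrad (x + s • v)).hasFDerivAt.comp_hasDerivAt s hl
  simp [InnerProductSpace.toDual_apply_apply] at this
  exact this

lemma descent_lemma (F : E → ℝ) (F' : E → E)
    (hgrad : ∀ u, HasGradientAt F (F' u) u) (L : ℝ) (hL : 0 ≤ L)
    (hLip : ∀ u v, ‖F' u - F' v‖ ≤ L * ‖u - v‖) (x v : E) :
    F (x + v) ≤ F x + ⟪F' x, v⟫_ℝ + L / 2 * ‖v‖ ^ 2 := by
  have hF'cont : Continuous F' := by
    have : LipschitzWith (Real.toNNReal L) F' := by
      apply LipschitzWith.of_dist_le_mul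
      intro a b
      rw [dist_eq_norm, dist_eq_norm, Real.coe_toNNReal L hL]
      exact hLip a b
    exact this.continuous
  have hcont : Continuous fun s : ℝ => ⟪F' (x + s • v), v⟫_ℝ := by
    exact Continuous.inner (hF'cont.comp (by continuity)) continuous_const
  have hint : ∫ s in (0:ℝ)..1, ⟪F' (x + s • v), v⟫_ℝ = F (x + v) - F x := by
    rw [intervalIntegral.integral_eq_sub_of_hasDerivAt
      (fun s _ => hasDerivAt_line F F' hgrad x v s) (hcont.intervalIntegrable 0 1)]
    simp
  have hcont2 : Continuous fun s : ℝ => ⟪F' x, v⟫_ℝ + L * s * ‖v‖ ^ 2 := by continuity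
  have hbound : ∫ s in (0:ℝ)..1, ⟪F' (x + s • v), v⟫_ℝ
      ≤ ∫ s in (0:ℝ)..1, (⟪F' x, v⟫_ℝ + L * s * ‖v‖ ^ 2) := by
    apply intervalIntegral.integral_mono_on zero_le_one (hcont.intervalIntegrable 0 1)
      (hcont2.intervalIntegrable 0 1)
    intro s hs
    have h1 : ⟪F' (x + s • v), v⟫_ℝ - ⟪F' x, v⟫_ℝ = ⟪F' (x + s • v) - F' x, v⟫_ℝ :=
      (inner_sub_left _ _ _).symm
    have h2 : ⟪F' (x + s • v) - F' x, v⟫_ℝ ≤ ‖F' (x + s • v) - F' x‖ * ‖v‖ :=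
      real_inner_le_norm _ _
    have h3 : ‖F' (x + s • v) - F' x‖ ≤ L * (s * ‖v‖) := by
      have := hLip (x + s • v) x
      have hn : ‖x + s • v - x‖ = s * ‖v‖ := by
        rw [add_sub_cancel_left, norm_smul, Real.norm_eq_abs, abs_of_nonneg hs.1]
      rwa [hn] at this
    have h4 : ‖F' (x + s • v) - F' x‖ * ‖v‖ ≤ L * (s * ‖v‖) * ‖v‖ :=
      mul_le_mul_of_nonneg_right h3 (norm_nonneg _)
    nlinarith [norm_nonneg v]
  have hval : ∫ s in (0:ℝ)..1, (⟪F' x, v⟫_ℝ + L * s * ‖v‖ ^ 2)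
      = ⟪F' x, v⟫_ℝ + L / 2 * ‖v‖ ^ 2 := by
    have : (fun s : ℝ => ⟪F' x, v⟫_ℝ + L * s * ‖v‖ ^ 2)
        = fun s : ℝ => ⟪F' x, v⟫_ℝ + (L * ‖v‖ ^ 2) * s := by funext s; ring
    have hi : IntervalIntegrable (fun s : ℝ => (L * ‖v‖ ^ 2) * s) MeasureTheory.volume 0 1 :=
      (continuous_const.mul continuous_id').intervalIntegrable 0 1
    rw [this, intervalIntegral.integral_add intervalIntegrable_const hi,
      intervalIntegral.integral_const_mul, integral_id]
    simp
    ring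
  linarith [hint ▸ hbound, hval ▸ hbound]

lemma grad_convex_ineq (F : E → ℝ) (F' : E → E)
    (hconv : ConvexOn ℝ Set.univ F)
    (hgrad : ∀ u, HasGradientAt F (F' u) u) (x w : E) :
    F x + ⟪F' x, w - x⟫_ℝ ≤ F w := by
  have hline : ConvexOn ℝ Set.univ (fun t : ℝ => F (x + t • (w - x))) := by
    have h0 := hconv.comp_affineMap (AffineMap.lineMap x w)
    simp only [Set.preimage_univ] at h0
    have heq : (F ∘ ⇑(AffineMap.lineMap x w)) = fun t : ℝ => F (x + t • (w - x)) := by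
      funext t; simp [Function.comp, AffineMap.lineMap_apply, add_comm]
    rwa [heq] at h0
  have hd : HasDerivAt (fun t : ℝ => F (x + t • (w - x))) ⟪F' x, w - x⟫_ℝ 0 := by
    simpa using hasDerivAt_line F F' hgrad x (w - x) 0
  have := hline.le_slope_of_hasDerivAt (mem_univ (0:ℝ)) (mem_univ (1:ℝ)) zero_lt_one hd
  rw [slope_def_field] at this
  simp at this
  linarith

lemma proj_vi {Z : Set E} (hZconv : Convex ℝ Z)
    (proj : E → E) (hproj : ∀ u, proj u ∈ Z ∧ ∀ w ∈ Z, ‖u - proj u‖ ≤ ‖u - w‖)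
    (u : E) : ∀ w ∈ Z, ⟪u - proj u, w - proj u⟫_ℝ ≤ 0 := by
  have hmem := (hproj u).1
  have hne : Nonempty Z := ⟨⟨proj u, hmem⟩⟩
  have heq : ‖u - proj u‖ = ⨅ w : Z, ‖u - w‖ := by
    apply le_antisymm
    · exact le_ciInf fun w => (hproj u).2 w w.2
    · exact ciInf_le ⟨0, fun _ ⟨_, h⟩ => h ▸ norm_nonneg _⟩ (⟨proj u, hmem⟩ : Z)
  exact (norm_eq_iInf_iff_real_inner_le_zero hZconv hmem).mp heq

lemma key_step (F : E → ℝ) (F' : E → E)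
    (hconv : ConvexOn ℝ Set.univ F)
    (hgrad : ∀ u, HasGradientAt F (F' u) u) (L : ℝ) (hL : 0 < L)
    (hLip : ∀ u v, ‖F' u - F' v‖ ≤ L * ‖u - v‖)
    {Z : Set E} (hZconv : Convex ℝ Z)
    (proj : E → E) (hproj : ∀ u, proj u ∈ Z ∧ ∀ w ∈ Z, ‖u - proj u‖ ≤ ‖u - w‖)
    (y x : E) (hx : x ∈ Z) :
    F (proj (y - (1 / L) • F' y)) ≤
      F x + L / 2 * (‖y - x‖ ^ 2 - ‖proj (y - (1 / L) • F' y) - x‖ ^ 2) := by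
  set zp := proj (y - (1 / L) • F' y) with hzp
  -- descent
  have hdesc : F zp ≤ F y + ⟪F' y, zp - y⟫_ℝ + L / 2 * ‖zp - y‖ ^ 2 := by
    have := descent_lemma F F' hgrad L hL.le hLip y (zp - y)
    simpa using this
  -- convexity
  have hcvx : F y + ⟪F' y, x - y⟫_ℝ ≤ F x := grad_convex_ineq F F' hconv hgrad y x
  -- projection VI
  have hvi : ⟪y - (1 / L) • F' y - zp, x - zp⟫_ℝ ≤ 0 :=
    proj_vi hZconv proj hproj (y - (1 / L) • F' y) x hx
  have hvi' : ⟪F' y, x - zp⟫_ℝ ≥ L * ⟪y - zp, x - zp⟫_ℝ := by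
    have hexp : ⟪y - (1 / L) • F' y - zp, x - zp⟫_ℝ
        = ⟪y - zp, x - zp⟫_ℝ - (1 / L) * ⟪F' y, x - zp⟫_ℝ := by
      rw [sub_right_comm, inner_sub_left, real_inner_smul_left]
    rw [hexp] at hvi
    rw [ge_iff_le, ← sub_nonneg]
    have h2 : (1 / L) * ⟪F' y, x - zp⟫_ℝ - ⟪y - zp, x - zp⟫_ℝ ≥ 0 := by linarith
    calc (0:ℝ) ≤ L * ((1 / L) * ⟪F' y, x - zp⟫_ℝ - ⟪y - zp, x - zp⟫_ℝ) :=
          mul_nonneg hL.le h2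
      _ = ⟪F' y, x - zp⟫_ℝ - L * ⟪y - zp, x - zp⟫_ℝ := by
          field_simp
  -- split inner product
  have hsplit : ⟪F' y, zp - y⟫_ℝ = ⟪F' y, zp - x⟫_ℝ + ⟪F' y, x - y⟫_ℝ := by
    rw [← inner_add_right]; congr 1; abel
  have hneg : ⟪F' y, zp - x⟫_ℝ = - ⟪F' y, x - zp⟫_ℝ := by
    rw [← inner_neg_right]; congr 1; abel
  have hnegi : ⟪y - zp, zp - x⟫_ℝ = - ⟪y - zp, x - zp⟫_ℝ := by
    rw [← inner_neg_right]; congr 1; abel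
  -- norm identity
  have hid : ‖y - x‖ ^ 2 = ‖y - zp‖ ^ 2 + 2 * ⟪y - zp, zp - x⟫_ℝ + ‖zp - x‖ ^ 2 := by
    have h := norm_add_sq_real (y - zp) (zp - x)
    have : y - zp + (zp - x) = y - x := by abel
    rw [this] at h
    linarith
  have hzpy : ‖zp - y‖ = ‖y - zp‖ := norm_sub_rev _ _
  rw [hzpy] at hdesc
  have hi2 : ⟪y - zp, zp - x⟫_ℝ = (‖y - x‖ ^ 2 - ‖y - zp‖ ^ 2 - ‖zp - x‖ ^ 2) / 2 := by
    linarith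
  have e1 : L * ⟪y - zp, zp - x⟫_ℝ
      = L / 2 * (‖y - x‖ ^ 2 - ‖y - zp‖ ^ 2 - ‖zp - x‖ ^ 2) := by rw [hi2]; ring
  have e2 : L * ⟪y - zp, x - zp⟫_ℝ = - (L * ⟪y - zp, zp - x⟫_ℝ) := by rw [hnegi]; ring
  linarith [hdesc, hcvx, hvi', hsplit, hneg, e1, e2]

end Aux

/-- Nesterov/FISTA accelerated projected gradient rate:
`F : ℝⁿ → ℝ` convex with `L`-Lipschitz gradient `F'`, `Z` closed convex, `proj` the metric
projection onto `Z`, iterates `z` with extrapolation points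
`y k = z k + ((k-1)/(k+2)) • (z k - z (k-1))` and
`z (k+1) = proj (y k - (1/L) • F' (y k))`. -/
theorem nesterov_accelerated_rate (n : ℕ)
    (F : EuclideanSpace ℝ (Fin n) → ℝ) (F' : EuclideanSpace ℝ (Fin n) → EuclideanSpace ℝ (Fin n))
    (hFconv : ConvexOn ℝ Set.univ F)
    (hgrad : ∀ u, HasGradientAt F (F' u) u)
    (L : ℝ) (hL : 0 < L)
    (hLip : ∀ u v, ‖F' u - F' v‖ ≤ L * ‖u - v‖)
    (Z : Set (EuclideanSpace ℝ (Fin n))) (hZne : Z.Nonempty) (hZclosed : IsClosed Z)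
    (hZconv : Convex ℝ Z)
    (proj : EuclideanSpace ℝ (Fin n) → EuclideanSpace ℝ (Fin n))
    (hproj : ∀ u, proj u ∈ Z ∧ ∀ w ∈ Z, ‖u - proj u‖ ≤ ‖u - w‖)
    (zstar : EuclideanSpace ℝ (Fin n)) (hzstarZ : zstar ∈ Z)
    (hzstar : ∀ w ∈ Z, F zstar ≤ F w)
    (z y : ℕ → EuclideanSpace ℝ (Fin n)) (hz0 : z 0 ∈ Z)
    (hy : ∀ k : ℕ, y k = z k + (((k : ℝ) - 1) / ((k : ℝ) + 2)) • (z k - z (k - 1)))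
    (hupdate : ∀ k : ℕ, z (k + 1) = proj (y k - (1 / L) • F' (y k))) :
    ∀ t : ℕ, 1 ≤ t →
      F (z t) - F zstar ≤ 2 * L * ‖z 0 - zstar‖ ^ 2 / ((t : ℝ) + 1) ^ 2 := by
  have hks : ∀ (yy x : EuclideanSpace ℝ (Fin n)), x ∈ Z →
      F (proj (yy - (1 / L) • F' yy)) ≤
        F x + L / 2 * (‖yy - x‖ ^ 2 - ‖proj (yy - (1 / L) • F' yy) - x‖ ^ 2) :=
    fun yy x hx => key_step F F' hFconv hgrad L hL hLip hZconv proj hproj yy x hx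
  have hZmem : ∀ k, z k ∈ Z := by
    intro k
    cases k with
    | zero => exact hz0
    | succ k => rw [hupdate k]; exact (hproj _).1
  have hv : ∀ k, 0 ≤ F (z k) - F zstar := fun k => sub_nonneg.2 (hzstar _ (hZmem k))
  set u : ℕ → EuclideanSpace ℝ (Fin n) :=
    fun k => (((k : ℝ) + 1) / 2) • z k - (((k : ℝ) - 1) / 2) • z (k - 1) - zstar with hu
  set Φ : ℕ → ℝ :=
    fun k => (((k : ℝ) + 1) ^ 2 / 4) * (F (z k) - F zstar) + L / 2 * ‖u k‖ ^ 2 with hΦ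
  -- base case
  have hy0 : y 0 = z 0 := by simpa using hy 0
  have hbase : Φ 1 ≤ L / 2 * ‖z 0 - zstar‖ ^ 2 := by
    have hk := hks (y 0) zstar hzstarZ
    rw [← hupdate 0, hy0] at hk
    norm_num at hk
    have hu1 : u 1 = z 1 - zstar := by
      simp only [hu]
      norm_num
    simp only [hΦ, hu1]
    norm_num
    linarith
  -- induction step
  have hstep : ∀ k, 1 ≤ k → Φ (k + 1) ≤ Φ k := by
    intro k hk1
    have hK1 : (1 : ℝ) ≤ (k : ℝ) := by exact_mod_cast hk1
    have hK2 : ((k : ℝ) + 2) ≠ 0 := by positivity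
    set T : ℝ := ((k : ℝ) + 2) / 2 with hT
    have hT1 : 1 ≤ T := by rw [hT]; linarith
    have hT0 : 0 < T := by linarith
    have hTne : T ≠ 0 := ne_of_gt hT0
    set xk := (1 - 1 / T) • z k + (1 / T) • zstar with hxk
    have ha : (0 : ℝ) ≤ 1 - 1 / T := by
      rw [sub_nonneg]
      exact div_le_one_of_le₀ hT1 hT0.le
    have hb : (0 : ℝ) ≤ 1 / T := by positivity
    have hxkZ : xk ∈ Z := hZconv (hZmem k) hzstarZ ha hb (by ring)
    have hconvF : F xk ≤ (1 - 1 / T) * F (z k) + (1 / T) * F zstar :=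
      hFconv.2 (mem_univ _) (mem_univ _) ha hb (by ring)
    have hkk := hks (y k) xk hxkZ
    rw [← hupdate k] at hkk
    -- vector identities
    have id1 : T • (y k - xk) = u k := by
      rw [hy k]
      simp only [hu, hxk, hT]
      match_scalars <;> field_simp <;> ring
    have id2 : T • (z (k + 1) - xk) = u (k + 1) := by
      simp only [hu, hxk, hT, Nat.add_sub_cancel]
      push_cast
      match_scalars <;> field_simp <;> ring
    have n1 : ‖u k‖ ^ 2 = T ^ 2 * ‖y k - xk‖ ^ 2 := by
      rw [← id1, norm_smul, Real.norm_eq_abs, abs_of_pos hT0, mul_pow]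
    have n2 : ‖u (k + 1)‖ ^ 2 = T ^ 2 * ‖z (k + 1) - xk‖ ^ 2 := by
      rw [← id2, norm_smul, Real.norm_eq_abs, abs_of_pos hT0, mul_pow]
    have h1 : F (z (k + 1)) - F zstar ≤ (1 - 1 / T) * (F (z k) - F zstar)
        + L / 2 * (‖y k - xk‖ ^ 2 - ‖z (k + 1) - xk‖ ^ 2) := by
      have hexp : (1 - 1 / T) * (F (z k) - F zstar)
          = (1 - 1 / T) * F (z k) + (1 / T) * F zstar - F zstar := by
        field_simp
        ring
      linarith [hkk, hconvF]
    have e3 : T ^ 2 * ((1 - 1 / T) * (F (z k) - F zstar)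
          + L / 2 * (‖y k - xk‖ ^ 2 - ‖z (k + 1) - xk‖ ^ 2))
        = ((k : ℝ) ^ 2 + 2 * (k : ℝ)) / 4 * (F (z k) - F zstar)
          + L / 2 * (‖u k‖ ^ 2 - ‖u (k + 1)‖ ^ 2) := by
      rw [n1, n2, hT]
      field_simp
      ring
    have h2 := (mul_le_mul_of_nonneg_left h1 (sq_nonneg T)).trans_eq e3
    simp only [hΦ]
    push_cast
    have hT2 : T ^ 2 = ((k : ℝ) + 2) ^ 2 / 4 := by rw [hT]; ring
    rw [hT2] at h2
    linarith [h2, hv k]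
  -- combine
  have hmono : ∀ t, 1 ≤ t → Φ t ≤ L / 2 * ‖z 0 - zstar‖ ^ 2 := by
    intro t ht
    induction t with
    | zero => omega
    | succ m ih =>
      rcases Nat.lt_or_ge 1 (m + 1) with h | h
      · have hm : 1 ≤ m := by omega
        exact (hstep m hm).trans (ih hm)
      · have hm0 : m = 0 := by omega
        subst hm0
        exact hbase
  intro t ht
  have h1 := hmono t ht
  have h2 : ((t : ℝ) + 1) ^ 2 / 4 * (F (z t) - F zstar) ≤ Φ t := by
    simp only [hΦ]
    have : (0:ℝ) ≤ L / 2 * ‖u t‖ ^ 2 := by positivity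
    linarith
  have hpos : (0 : ℝ) < ((t : ℝ) + 1) ^ 2 := by positivity
  rw [le_div_iff₀ hpos]
  nlinarith [h1, h2]
end
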